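/- Let $F:\mathbb{R}^{n+1}\setminus\{0\}\to\mathbb{R}$ be a continuous function which is even ($F(-x)=F(x)$) and positively homogeneous of degree $-n-1$ ($F(\lambda x)=\lambda^{-n-1}F(x)$ for $\lambda>0$). Then for every $a\in\mathbb{R}^n$ and every $t>0$: $\int_{\mathbb{R}^n} F(y, a\cdot y + t)\, dy = \frac{1}{2t}\int_{S^{n-1}}\int_{-\infty}^{\infty} F(\omega, s)\, ds\, d\omega = \int_{\mathbb{R}^n} F(y, t)\, dy$. In particular, the value of $\int_{\mathbb{R}^n} F(y, a\cdot y + t)\, dy$ is independent of $a$. -/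

import Mathlib

open MeasureTheory
open scoped RealInnerProductSpace

open Set


lemma shift_Ioi (f : ℝ → ℝ) (c : ℝ) : ∫ x in Ioi (0:ℝ), f (c + x) = ∫ s in Ioi c, f s := by
  have A : MeasurableEmbedding fun x : ℝ => c + x := (Homeomorph.addLeft c).measurableEmbedding
  have B := A.setIntegral_map (μ := volume) f (Ioi c)
  rw [map_add_left_eq_self volume c, preimage_const_add_Ioi, sub_self] at B
  exact B.symm

lemma shift_Iic (f : ℝ → ℝ) (c : ℝ) : ∫ x in Iic (0:ℝ), f (c + x) = ∫ s in Iic c, f s := by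
  have A : MeasurableEmbedding fun x : ℝ => c + x := (Homeomorph.addLeft c).measurableEmbedding
  have B := A.setIntegral_map (μ := volume) f (Iic c)
  rw [map_add_left_eq_self volume c, preimage_const_add_Iic, sub_self] at B
  exact B.symm

lemma integral_vIP (m : ℕ) (g : ℝ → ℝ) :
    ∫ r : Ioi (0:ℝ), g r ∂(Measure.volumeIoiPow m) = ∫ r in Ioi (0:ℝ), (r:ℝ)^m * g r := by
  simp only [Measure.volumeIoiPow, ENNReal.ofReal]
  rw [integral_withDensity_eq_integral_smul ((measurable_subtype_coe.pow_const _).real_toNNReal) _,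
    integral_subtype_comap measurableSet_Ioi (fun a : ℝ => (a ^ m).toNNReal • g a)]
  refine setIntegral_congr_fun measurableSet_Ioi fun x hx => ?_
  rw [NNReal.smul_def, Real.coe_toNNReal _ (pow_nonneg hx.out.le _), smul_eq_mul]

variable {n : ℕ}

lemma aux_bound (hn : 1 ≤ n) (F : EuclideanSpace ℝ (Fin n) × ℝ → ℝ)
    (hcont : ContinuousOn F {x | x ≠ 0})
    (hhom : ∀ l : ℝ, 0 < l → ∀ x : EuclideanSpace ℝ (Fin n) × ℝ, x ≠ 0 →
        F (l • x) = l ^ (-(n : ℝ) - 1) * F x) :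
    ∃ C : ℝ, 0 ≤ C ∧ ∀ x : EuclideanSpace ℝ (Fin n) × ℝ, x ≠ 0 →
      |F x| ≤ C * ‖x‖ ^ (-(n : ℝ) - 1) := by
  obtain ⟨C, hC⟩ := (isCompact_sphere (0 : EuclideanSpace ℝ (Fin n) × ℝ) 1).exists_bound_of_continuousOn
    (hcont.mono (fun x hx => by
      simp only [mem_sphere_iff_norm, sub_zero] at hx
      simp only [mem_setOf_eq]
      intro h; rw [h] at hx; simp at hx))
  have hC0 : 0 ≤ C := by
    have h1 : ((0 : EuclideanSpace ℝ (Fin n)), (1:ℝ)) ∈ Metric.sphere (0 : EuclideanSpace ℝ (Fin n) × ℝ) 1 := by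
      simp [Prod.norm_def]
    exact (norm_nonneg _).trans (hC _ h1)
  refine ⟨C, hC0, fun x hx => ?_⟩
  have hnx : (0:ℝ) < ‖x‖ := norm_pos_iff.2 hx
  have hx0 : (‖x‖⁻¹ • x) ∈ Metric.sphere (0 : EuclideanSpace ℝ (Fin n) × ℝ) 1 := by
    simp [norm_smul, abs_of_pos (inv_pos.2 hnx), inv_mul_cancel₀ hnx.ne']
  have hx0' : (‖x‖⁻¹ • x) ≠ 0 := smul_ne_zero (inv_ne_zero hnx.ne') hx
  have heq := hhom ‖x‖ hnx (‖x‖⁻¹ • x) hx0'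
  rw [smul_inv_smul₀ hnx.ne'] at heq
  rw [heq, abs_mul, abs_of_pos (Real.rpow_pos_of_pos hnx _), mul_comm]
  exact mul_le_mul_of_nonneg_right ((Real.norm_eq_abs _ ▸ hC _ hx0))
    (le_of_lt (Real.rpow_pos_of_pos hnx _))

lemma aux_int_slice (hn : 1 ≤ n) (F : EuclideanSpace ℝ (Fin n) × ℝ → ℝ)
    (hcont : ContinuousOn F {x | x ≠ 0}) {C : ℝ} (hC0 : 0 ≤ C)
    (hFb : ∀ x : EuclideanSpace ℝ (Fin n) × ℝ, x ≠ 0 → |F x| ≤ C * ‖x‖ ^ (-(n : ℝ) - 1))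
    (ω : EuclideanSpace ℝ (Fin n)) (hω : ‖ω‖ = 1) :
    Integrable (fun s : ℝ => F (ω, s)) := by
  have hne : ∀ s : ℝ, ((ω, s) : EuclideanSpace ℝ (Fin n) × ℝ) ≠ 0 := by
    intro s h
    have h1 : ω = 0 := by
      have := congrArg Prod.fst h; simpa using this
    rw [h1] at hω; simp at hω
  have hc : Continuous fun s : ℝ => F (ω, s) :=
    hcont.comp_continuous (Continuous.prodMk continuous_const continuous_id) hne
  have key : ∀ s : ℝ, ‖F (ω, s)‖ ≤ (C * 2 ^ ((n:ℝ)+1)) * (1 + ‖s‖) ^ (-((n:ℝ)+1)) := by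
    intro s
    have h1 : (1 + |s|)/2 ≤ ‖((ω, s) : EuclideanSpace ℝ (Fin n) × ℝ)‖ := by
      rw [Prod.norm_def, hω]
      rcases le_total 1 |s| with h | h
      · rw [Real.norm_eq_abs]; rw [max_eq_right h]; linarith
      · rw [Real.norm_eq_abs]; rw [max_eq_left h]; linarith
    have h2 : |F (ω, s)| ≤ C * ‖((ω, s) : EuclideanSpace ℝ (Fin n) × ℝ)‖ ^ (-(n:ℝ)-1) := hFb _ (hne s)
    have h3 : ‖((ω, s) : EuclideanSpace ℝ (Fin n) × ℝ)‖ ^ (-(n:ℝ)-1) ≤ ((1 + |s|)/2) ^ (-(n:ℝ)-1) := by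
      apply Real.rpow_le_rpow_of_nonpos (by positivity) h1
      push_cast; linarith
    have h4 : ((1 + |s|)/2) ^ (-(n:ℝ)-1) = 2 ^ ((n:ℝ)+1) * (1+|s|) ^ (-((n:ℝ)+1)) := by
      rw [Real.div_rpow (by positivity) (by norm_num)]
      rw [div_eq_mul_inv, ← Real.rpow_neg (by norm_num : (0:ℝ) ≤ 2)]
      rw [show -(n:ℝ)-1 = -((n:ℝ)+1) by ring, mul_comm]
      rw [neg_neg]
    rw [Real.norm_eq_abs, Real.norm_eq_abs]
    calc |F (ω, s)| ≤ C * ((1 + |s|)/2) ^ (-(n:ℝ)-1) :=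
          h2.trans (mul_le_mul_of_nonneg_left h3 hC0)
      _ = (C * 2 ^ ((n:ℝ)+1)) * (1 + |s|) ^ (-((n:ℝ)+1)) := by rw [h4]; ring
  have hint : Integrable (fun s : ℝ => (C * 2 ^ ((n:ℝ)+1)) * (1 + ‖s‖) ^ (-((n:ℝ)+1))) := by
    apply Integrable.const_mul
    apply integrable_one_add_norm (μ := volume)
    rw [Module.finrank_self]
    push_cast; have : (1:ℝ) ≤ (n:ℝ) := by exact_mod_cast hn
    linarith
  exact hint.mono' hc.aestronglyMeasurable (Filter.Eventually.of_forall key)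

lemma aux_int_plane (hn : 1 ≤ n) (F : EuclideanSpace ℝ (Fin n) × ℝ → ℝ)
    (hcont : ContinuousOn F {x | x ≠ 0}) {C : ℝ} (hC0 : 0 ≤ C)
    (hFb : ∀ x : EuclideanSpace ℝ (Fin n) × ℝ, x ≠ 0 → |F x| ≤ C * ‖x‖ ^ (-(n : ℝ) - 1))
    (a : EuclideanSpace ℝ (Fin n)) {b : ℝ} (hb : b ≠ 0) :
    Integrable (fun y : EuclideanSpace ℝ (Fin n) => F (y, ⟪a, y⟫ + b)) := by
  have hne : ∀ y : EuclideanSpace ℝ (Fin n),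
      ((y, ⟪a, y⟫ + b) : EuclideanSpace ℝ (Fin n) × ℝ) ≠ 0 := by
    intro y h
    have h1 : y = 0 := by have := congrArg Prod.fst h; simpa using this
    have h2 : ⟪a, y⟫ + b = 0 := by have := congrArg Prod.snd h; simpa using this
    rw [h1] at h2; simp [inner_zero_right] at h2; exact hb h2
  have hcmap : Continuous fun y : EuclideanSpace ℝ (Fin n) =>
      ((y, ⟪a, y⟫ + b) : EuclideanSpace ℝ (Fin n) × ℝ) :=
    Continuous.prodMk continuous_id ((continuous_const.inner continuous_id).add continuous_const)
  have hc : Continuous fun y : EuclideanSpace ℝ (Fin n) => F (y, ⟪a, y⟫ + b) :=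
    hcont.comp_continuous hcmap hne
  set δ : ℝ := |b| / (2 * (‖a‖ + 1)) with hδdef
  have hδ : 0 < δ := by
    apply div_pos (abs_pos.2 hb); positivity
  set c : ℝ := min (|b|/2) δ / (1 + δ) with hcdef
  have hcpos : 0 < c := by
    apply div_pos (lt_min (by positivity) hδ); positivity
  have claim : ∀ y : EuclideanSpace ℝ (Fin n),
      c * (1 + ‖y‖) ≤ ‖((y, ⟪a, y⟫ + b) : EuclideanSpace ℝ (Fin n) × ℝ)‖ := by
    intro y
    rcases le_total ‖y‖ δ with hy | hy
    · have hinner : |⟪a, y⟫| ≤ ‖a‖ * ‖y‖ := abs_real_inner_le_norm a y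
      have h5 : ‖a‖ * ‖y‖ ≤ |b| / 2 := by
        have h6 : ‖a‖ * ‖y‖ ≤ (‖a‖ + 1) * δ := by nlinarith [norm_nonneg a, norm_nonneg y]
        have h7 : (‖a‖ + 1) * δ = |b| / 2 := by
          rw [hδdef]; field_simp
        linarith
      have h8 : |b| / 2 ≤ |⟪a, y⟫ + b| := by
        have h9 : |b| ≤ |⟪a, y⟫ + b| + |⟪a, y⟫| := by
          have := abs_add_le (⟪a, y⟫ + b) (-⟪a, y⟫)
          simpa using this
        linarith
      have h10 : |⟪a, y⟫ + b| ≤ ‖((y, ⟪a, y⟫ + b) : EuclideanSpace ℝ (Fin n) × ℝ)‖ := by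
        rw [Prod.norm_def]; exact le_max_right _ _
      have h11 : c * (1 + ‖y‖) ≤ c * (1 + δ) := by
        apply mul_le_mul_of_nonneg_left (by linarith) hcpos.le
      have h12 : c * (1 + δ) = min (|b|/2) δ := by
        rw [hcdef]; field_simp
      have h13 : min (|b|/2) δ ≤ |b|/2 := min_le_left _ _
      linarith
    · have h10 : ‖y‖ ≤ ‖((y, ⟪a, y⟫ + b) : EuclideanSpace ℝ (Fin n) × ℝ)‖ := by
        rw [Prod.norm_def]; exact le_max_left _ _
      have h11 : c ≤ δ / (1 + δ) := by
        apply div_le_div_of_nonneg_right (min_le_right _ _) (by positivity) |>.trans_eq rfl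
      have h12 : δ / (1 + δ) * (1 + ‖y‖) ≤ ‖y‖ := by
        rw [div_mul_eq_mul_div, div_le_iff₀ (by positivity)]
        nlinarith
      have h13 : c * (1 + ‖y‖) ≤ δ / (1 + δ) * (1 + ‖y‖) := by
        apply mul_le_mul_of_nonneg_right h11 (by positivity)
      linarith
  have key : ∀ y : EuclideanSpace ℝ (Fin n),
      ‖F (y, ⟪a, y⟫ + b)‖ ≤ (C * c ^ (-(n:ℝ)-1)) * (1 + ‖y‖) ^ (-((n:ℝ)+1)) := by
    intro y
    have h2 := hFb _ (hne y)
    have h3 : ‖((y, ⟪a, y⟫ + b) : EuclideanSpace ℝ (Fin n) × ℝ)‖ ^ (-(n:ℝ)-1) ≤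
        (c * (1 + ‖y‖)) ^ (-(n:ℝ)-1) := by
      apply Real.rpow_le_rpow_of_nonpos (by positivity) (claim y)
      have : (0:ℝ) ≤ (n:ℝ) := Nat.cast_nonneg n
      linarith
    have h4 : (c * (1 + ‖y‖)) ^ (-(n:ℝ)-1) = c ^ (-(n:ℝ)-1) * (1 + ‖y‖) ^ (-((n:ℝ)+1)) := by
      rw [Real.mul_rpow hcpos.le (by positivity), show -(n:ℝ)-1 = -((n:ℝ)+1) by ring]
    rw [Real.norm_eq_abs]
    calc |F (y, ⟪a, y⟫ + b)| ≤ C * (c * (1 + ‖y‖)) ^ (-(n:ℝ)-1) :=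
          h2.trans (mul_le_mul_of_nonneg_left h3 hC0)
      _ = (C * c ^ (-(n:ℝ)-1)) * (1 + ‖y‖) ^ (-((n:ℝ)+1)) := by rw [h4]; ring
  have hint : Integrable (fun y : EuclideanSpace ℝ (Fin n) =>
      (C * c ^ (-(n:ℝ)-1)) * (1 + ‖y‖) ^ (-((n:ℝ)+1))) := by
    apply Integrable.const_mul
    apply integrable_one_add_norm (μ := volume)
    rw [finrank_euclideanSpace_fin]
    push_cast; linarith
  exact hint.mono' hc.aestronglyMeasurable (Filter.Eventually.of_forall key)

lemma aux_inner (hn : 1 ≤ n) (F : EuclideanSpace ℝ (Fin n) × ℝ → ℝ)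
    (hhom : ∀ l : ℝ, 0 < l → ∀ x : EuclideanSpace ℝ (Fin n) × ℝ, x ≠ 0 →
        F (l • x) = l ^ (-(n : ℝ) - 1) * F x)
    (ω : EuclideanSpace ℝ (Fin n)) (hω : ‖ω‖ = 1)
    (hFint : Integrable fun s : ℝ => F (ω, s)) (c t : ℝ) (ht : 0 < t) :
    ∫ r in Ioi (0:ℝ), (r:ℝ)^(n-1) * (F (r • ω, r * c + t) + F (r • ω, r * c - t))
      = t⁻¹ * ∫ s : ℝ, F (ω, s) := by
  set G : ℝ → ℝ := fun u => F (ω, c + t*u) + F (ω, c - t*u) with hG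
  have hωne : ω ≠ 0 := by intro h; rw [h] at hω; simp at hω
  have step1 : ∫ r in Ioi (0:ℝ), (r:ℝ)^(n-1) * (F (r • ω, r * c + t) + F (r • ω, r * c - t))
      = ∫ r in Ioi (0:ℝ), (|(-1:ℝ)| * r ^ ((-1:ℝ)-1)) • G (r ^ (-1:ℝ)) := by
    refine setIntegral_congr_fun measurableSet_Ioi fun r hr => ?_
    have hrpos : (0:ℝ) < r := hr
    have hne1 : ((ω, c + t*r⁻¹) : EuclideanSpace ℝ (Fin n) × ℝ) ≠ 0 := by
      intro h; exact hωne (by have := congrArg Prod.fst h; simpa using this)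
    have hne2 : ((ω, c - t*r⁻¹) : EuclideanSpace ℝ (Fin n) × ℝ) ≠ 0 := by
      intro h; exact hωne (by have := congrArg Prod.fst h; simpa using this)
    have e1 : F (r • ω, r * c + t) = r ^ (-(n:ℝ)-1) * F (ω, c + t*r⁻¹) := by
      have h := hhom r hrpos _ hne1
      have heq : r • ((ω, c + t*r⁻¹) : EuclideanSpace ℝ (Fin n) × ℝ) = (r • ω, r * c + t) := by
        rw [Prod.smul_mk, smul_eq_mul]
        congr 1
        field_simp
      rw [← heq, h]
    have e2 : F (r • ω, r * c - t) = r ^ (-(n:ℝ)-1) * F (ω, c - t*r⁻¹) := by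
      have h := hhom r hrpos _ hne2
      have heq : r • ((ω, c - t*r⁻¹) : EuclideanSpace ℝ (Fin n) × ℝ) = (r • ω, r * c - t) := by
        rw [Prod.smul_mk, smul_eq_mul]
        congr 1
        field_simp
      rw [← heq, h]
    have e3 : (r:ℝ)^(n-1) * r ^ (-(n:ℝ)-1) = r ^ ((-1:ℝ)-1) := by
      rw [← Real.rpow_natCast r (n-1), ← Real.rpow_add hrpos]
      congr 1
      rw [Nat.cast_sub hn]
      push_cast; ring
    rw [e1, e2, Real.rpow_neg_one r, abs_neg, abs_one, one_mul, smul_eq_mul, hG]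
    simp only []
    rw [← e3]; ring
  rw [step1, integral_comp_rpow_Ioi G (by norm_num : (-1:ℝ) ≠ 0)]
  have ia : Integrable fun u : ℝ => F (ω, c + t*u) := by
    have h1 : Integrable fun v : ℝ => F (ω, c + v) := hFint.comp_add_left c
    exact (integrable_comp_mul_left_iff (fun v => F (ω, c + v)) ht.ne').2 h1
  have ib : Integrable fun u : ℝ => F (ω, c - t*u) := by
    have h1 : Integrable fun v : ℝ => F (ω, c + v) := hFint.comp_add_left c
    have h2 : Integrable fun v : ℝ => F (ω, c + -v) := h1.comp_neg
    have h3 := (integrable_comp_mul_left_iff (fun v => F (ω, c + -v)) ht.ne').2 h2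
    simpa [sub_eq_add_neg] using h3
  have split : ∫ u in Ioi (0:ℝ), G u
      = (∫ u in Ioi (0:ℝ), F (ω, c + t*u)) + ∫ u in Ioi (0:ℝ), F (ω, c - t*u) :=
    integral_add ia.integrableOn ib.integrableOn
  have e4 : ∫ u in Ioi (0:ℝ), F (ω, c + t*u) = t⁻¹ * ∫ s in Ioi c, F (ω, s) := by
    have h := integral_comp_mul_left_Ioi (fun x => F (ω, c + x)) 0 ht
    rw [mul_zero] at h
    rw [h, smul_eq_mul]
    congr 1
    exact shift_Ioi (fun s => F (ω, s)) c
  have e5 : ∫ u in Ioi (0:ℝ), F (ω, c - t*u) = t⁻¹ * ∫ s in Iic c, F (ω, s) := by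
    have h := integral_comp_mul_left_Ioi (fun x => F (ω, c - x)) 0 ht
    rw [mul_zero] at h
    have h2 : ∫ x in Ioi (0:ℝ), F (ω, c - x) = ∫ x in Iic (0:ℝ), F (ω, c + x) := by
      have h3 := integral_comp_neg_Ioi (0:ℝ) (fun v => F (ω, c + v))
      simp only [neg_zero] at h3
      rw [← h3]
      exact setIntegral_congr_fun measurableSet_Ioi fun x _ => by rw [sub_eq_add_neg]
    rw [h, h2, smul_eq_mul]
    congr 1
    exact shift_Iic (fun s => F (ω, s)) c
  have e6 := intervalIntegral.integral_Iic_add_Ioi (hFint.integrableOn) (hFint.integrableOn) (b := c) (μ := volume)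
  rw [split, e4, e5]
  rw [← e6]
  ring

theorem aux_main (hn : 1 ≤ n) (F : EuclideanSpace ℝ (Fin n) × ℝ → ℝ)
    (hcont : ContinuousOn F {x | x ≠ 0})
    (heven : ∀ x, F (-x) = F x)
    (hhom : ∀ l : ℝ, 0 < l → ∀ x : EuclideanSpace ℝ (Fin n) × ℝ, x ≠ 0 →
        F (l • x) = l ^ (-(n : ℝ) - 1) * F x)
    (a : EuclideanSpace ℝ (Fin n)) (t : ℝ) (ht : 0 < t) :
    (∫ y : EuclideanSpace ℝ (Fin n), F (y, ⟪a, y⟫ + t)) =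
        (1 / (2 * t)) *
          ∫ ω : Metric.sphere (0 : EuclideanSpace ℝ (Fin n)) 1, (∫ s : ℝ, F (↑ω, s))
            ∂((volume : Measure (EuclideanSpace ℝ (Fin n))).toSphere) := by
  obtain ⟨C, hC0, hFb⟩ := aux_bound hn F hcont hhom
  have hdim : Module.finrank ℝ (EuclideanSpace ℝ (Fin n)) = n := finrank_euclideanSpace_fin
  haveI : Nontrivial (EuclideanSpace ℝ (Fin n)) :=
    Module.nontrivial_of_finrank_pos (by rw [hdim]; exact hn)
  have int_p : Integrable (fun y : EuclideanSpace ℝ (Fin n) => F (y, ⟪a, y⟫ + t)) :=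
    aux_int_plane hn F hcont hC0 hFb a ht.ne'
  have int_m : Integrable (fun y : EuclideanSpace ℝ (Fin n) => F (y, ⟪a, y⟫ - t)) := by
    have := aux_int_plane hn F hcont hC0 hFb a (b := -t) (neg_ne_zero.2 ht.ne')
    simpa [sub_eq_add_neg] using this
  have hBA : (∫ y : EuclideanSpace ℝ (Fin n), F (y, ⟪a, y⟫ - t))
      = ∫ y : EuclideanSpace ℝ (Fin n), F (y, ⟪a, y⟫ + t) := by
    have h1 := integral_neg_eq_self (fun y : EuclideanSpace ℝ (Fin n) => F (y, ⟪a, y⟫ - t))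
      (volume : Measure (EuclideanSpace ℝ (Fin n)))
    rw [← h1]
    congr 1; funext y
    have h2 : ((-y : EuclideanSpace ℝ (Fin n)), ⟪a, -y⟫ - t)
        = -(((y, ⟪a, y⟫ + t)) : EuclideanSpace ℝ (Fin n) × ℝ) := by
      have : ⟪a, -y⟫ = -⟪a, y⟫ := inner_neg_right a y
      rw [Prod.neg_mk, this]; congr 1; ring
    rw [h2, heven]
  set h : EuclideanSpace ℝ (Fin n) → ℝ :=
    fun y => F (y, ⟪a, y⟫ + t) + F (y, ⟪a, y⟫ - t) with hh
  have int_h : Integrable h := int_p.add int_m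
  set T := homeomorphUnitSphereProd (EuclideanSpace ℝ (Fin n)) with hT
  have mp := (volume : Measure (EuclideanSpace ℝ (Fin n))).measurePreserving_homeomorphUnitSphereProd
  set f' : Metric.sphere (0 : EuclideanSpace ℝ (Fin n)) 1 × Ioi (0:ℝ) → ℝ :=
    fun p => h ((p.2 : ℝ) • (p.1 : EuclideanSpace ℝ (Fin n))) with hf'
  have hcomp : ∀ x : ({(0 : EuclideanSpace ℝ (Fin n))}ᶜ : Set _), f' (T x) = h x := by
    intro x
    have hx : (x : EuclideanSpace ℝ (Fin n)) ≠ 0 := x.2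
    show h ((((T x).2 : ℝ)) • ((T x).1 : EuclideanSpace ℝ (Fin n))) = h x
    rw [hT]
    simp only [homeomorphUnitSphereProd_apply_fst_coe, homeomorphUnitSphereProd_apply_snd_coe]
    rw [smul_inv_smul₀ (norm_ne_zero_iff.2 hx)]
  have emb : MeasurableEmbedding (Subtype.val :
      ({(0 : EuclideanSpace ℝ (Fin n))}ᶜ : Set _) → EuclideanSpace ℝ (Fin n)) :=
    MeasurableEmbedding.subtype_coe (measurableSet_singleton _).compl
  have key : ∫ y, h y = t⁻¹ * ∫ ω : Metric.sphere (0 : EuclideanSpace ℝ (Fin n)) 1,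
      (∫ s : ℝ, F (↑ω, s)) ∂((volume : Measure (EuclideanSpace ℝ (Fin n))).toSphere) := by
    have int_f' : Integrable f'
        (((volume : Measure (EuclideanSpace ℝ (Fin n))).toSphere).prod
          (Measure.volumeIoiPow (Module.finrank ℝ (EuclideanSpace ℝ (Fin n)) - 1))) := by
      rw [← mp.integrable_comp_emb (Homeomorph.measurableEmbedding T)]
      rw [show (f' ∘ T) = (fun x : ({(0 : EuclideanSpace ℝ (Fin n))}ᶜ : Set _) => h x)
        from funext hcomp]
      exact (emb.integrable_map_iff).1 (by
        rw [emb.map_comap, Subtype.range_coe]; exact int_h.restrict)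
    have step_inner : ∀ ω : Metric.sphere (0 : EuclideanSpace ℝ (Fin n)) 1,
        (∫ r : Ioi (0:ℝ), f' (ω, r)
          ∂(Measure.volumeIoiPow (Module.finrank ℝ (EuclideanSpace ℝ (Fin n)) - 1)))
          = t⁻¹ * ∫ s : ℝ, F (↑ω, s) := by
      intro ω
      have hω1 : ‖(ω : EuclideanSpace ℝ (Fin n))‖ = 1 := by
        simpa using mem_sphere_zero_iff_norm.1 ω.2
      have hFint := aux_int_slice hn F hcont hC0 hFb ω hω1
      rw [hdim]
      rw [show (fun r : Ioi (0:ℝ) => f' (ω, r))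
        = (fun r : Ioi (0:ℝ) => (fun u : ℝ => h (u • (ω : EuclideanSpace ℝ (Fin n)))) (r : ℝ))
        from rfl]
      rw [integral_vIP (n-1) (fun u : ℝ => h (u • (ω : EuclideanSpace ℝ (Fin n))))]
      rw [show ∫ r in Ioi (0:ℝ), (r:ℝ)^(n-1) * h (r • (ω : EuclideanSpace ℝ (Fin n)))
          = ∫ r in Ioi (0:ℝ), (r:ℝ)^(n-1) *
            (F (r • (ω : EuclideanSpace ℝ (Fin n)), r * ⟪a, (ω : EuclideanSpace ℝ (Fin n))⟫ + t)
            + F (r • (ω : EuclideanSpace ℝ (Fin n)), r * ⟪a, (ω : EuclideanSpace ℝ (Fin n))⟫ - t))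
        from by
          refine setIntegral_congr_fun measurableSet_Ioi fun r _ => ?_
          rw [hh]
          simp only [real_inner_smul_right]]
      exact aux_inner hn F hhom ω hω1 hFint ⟪a, (ω : EuclideanSpace ℝ (Fin n))⟫ t ht
    calc ∫ y, h y
        = ∫ x : ({(0 : EuclideanSpace ℝ (Fin n))}ᶜ : Set _), h x
            ∂((volume : Measure (EuclideanSpace ℝ (Fin n))).comap Subtype.val) := by
          rw [integral_subtype_comap (measurableSet_singleton _).compl h,
            restrict_compl_singleton]
      _ = ∫ p, f' p ∂(((volume : Measure (EuclideanSpace ℝ (Fin n))).toSphere).prod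
            (Measure.volumeIoiPow (Module.finrank ℝ (EuclideanSpace ℝ (Fin n)) - 1))) := by
          rw [← mp.integral_comp (Homeomorph.measurableEmbedding T) f']
          exact integral_congr_ae (Filter.Eventually.of_forall fun x => (hcomp x).symm)
      _ = ∫ ω : Metric.sphere (0 : EuclideanSpace ℝ (Fin n)) 1,
            (∫ r : Ioi (0:ℝ), f' (ω, r)
              ∂(Measure.volumeIoiPow (Module.finrank ℝ (EuclideanSpace ℝ (Fin n)) - 1)))
            ∂((volume : Measure (EuclideanSpace ℝ (Fin n))).toSphere) :=
          integral_prod f' int_f'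
      _ = ∫ ω : Metric.sphere (0 : EuclideanSpace ℝ (Fin n)) 1,
            (t⁻¹ * ∫ s : ℝ, F (↑ω, s))
            ∂((volume : Measure (EuclideanSpace ℝ (Fin n))).toSphere) :=
          integral_congr_ae (Filter.Eventually.of_forall step_inner)
      _ = t⁻¹ * ∫ ω : Metric.sphere (0 : EuclideanSpace ℝ (Fin n)) 1,
            (∫ s : ℝ, F (↑ω, s)) ∂((volume : Measure (EuclideanSpace ℝ (Fin n))).toSphere) :=
          integral_const_mul _ _
  have hsum : (∫ y : EuclideanSpace ℝ (Fin n), F (y, ⟪a, y⟫ + t))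
      + (∫ y : EuclideanSpace ℝ (Fin n), F (y, ⟪a, y⟫ - t)) = ∫ y, h y :=
    (integral_add int_p int_m).symm
  have ht' : t ≠ 0 := ht.ne'
  rw [hBA] at hsum
  rw [key] at hsum
  field_simp at hsum ⊢
  linarith


/-- If `F : ℝ^{n+1} \\ {0} → ℝ` is continuous, even, and positively homogeneous of degree
`-n-1`, then for every `a ∈ ℝⁿ` and `t > 0`:
`∫_{ℝⁿ} F(y, a·y + t) dy = (1/(2t)) ∫_{S^{n-1}} ∫_ℝ F(ω,s) ds dω = ∫_{ℝⁿ} F(y,t) dy`;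
in particular the left-hand side is independent of `a`. -/
theorem homogeneous_even_tilt_invariance (n : ℕ) (hn : 1 ≤ n)
    (F : EuclideanSpace ℝ (Fin n) × ℝ → ℝ)
    (hcont : ContinuousOn F {x | x ≠ 0})
    (heven : ∀ x, F (-x) = F x)
    (hhom : ∀ l : ℝ, 0 < l → ∀ x : EuclideanSpace ℝ (Fin n) × ℝ, x ≠ 0 →
        F (l • x) = l ^ (-(n : ℝ) - 1) * F x)
    (a : EuclideanSpace ℝ (Fin n)) (t : ℝ) (ht : 0 < t) :
    (∫ y : EuclideanSpace ℝ (Fin n), F (y, ⟪a, y⟫ + t)) =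
        (1 / (2 * t)) *
          ∫ ω : Metric.sphere (0 : EuclideanSpace ℝ (Fin n)) 1, (∫ s : ℝ, F (↑ω, s))
            ∂((volume : Measure (EuclideanSpace ℝ (Fin n))).toSphere) ∧
      (∫ y : EuclideanSpace ℝ (Fin n), F (y, ⟪a, y⟫ + t)) =
        ∫ y : EuclideanSpace ℝ (Fin n), F (y, t) := by
  refine ⟨aux_main hn F hcont heven hhom a t ht, ?_⟩
  rw [aux_main hn F hcont heven hhom a t ht, ← aux_main hn F hcont heven hhom 0 t ht]
  congr 1
  funext y
  simp
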